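/- (Safety) In a well-formed program of the tensor model language, every read access μ(x_i) performed during expression evaluation and every write access x_i ↦ v performed during statement evaluation satisfies x_i ∈ dom(μ); i.e., there are no out-of-bounds store accesses. -/

import Mathlib

/-- Rounding up to the nearest multiple of `M`. -/
noncomputable def roundUp (M d : ℕ) : ℕ := sInf {m : ℕ | ∃ n : ℕ, m = n * M ∧ d ≤ m}

/-- Tensor types are tuples of naturals. -/
abbrev Ty := List ℕ
/-- Multi-indices. -/
abbrev Index := List ℕ

/-- `IdxLe i t`: the multi-index `i` (with components in {1,2,…}) is bounded by `t`. -/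
def IdxLe (i t : Index) : Prop :=
  i.length = t.length ∧ ∀ l, l < t.length → 1 ≤ i.getD l 0 ∧ i.getD l 0 ≤ t.getD l 0

/-- Swap the `m`-th and `n`-th components (1-based). -/
def swapIdx (t : List ℕ) (m n : ℕ) : List ℕ :=
  (t.set (m-1) (t.getD (n-1) 0)).set (n-1) (t.getD (m-1) 0)

/-- Delete the `m`-th and `n`-th components (1-based, `m < n`). -/
def delete2 (t : List ℕ) (m n : ℕ) : List ℕ :=
  (t.eraseIdx (n-1)).eraseIdx (m-1)

/-- Insert value `l` at the `m`-th and `n`-th positions (1-based, `m < n`). -/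
def insert2 (i : List ℕ) (m n l : ℕ) : List ℕ :=
  (i.insertIdx (m-1) l).insertIdx (n-1) l

/-- Pad a tensor type componentwise. -/
noncomputable def padT (M : ℕ) (t : Ty) : Ty := t.map (roundUp M)

/-- The padding region of a type: indices within the padded bounds but not the original ones. -/
def PadReg (M : ℕ) (t : Ty) (i : Index) : Prop := ¬ IdxLe i t ∧ IdxLe i (padT M t)

inductive Op | add | sub | mul | div
deriving DecidableEq

/-- Expressions of the tensor model language. -/
inductive Expr
| var : String → Expr
| paren : Expr → Expr
| binop : Op → Expr → Expr → Expr
| prod : Expr → Expr → Expr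
| trans : Expr → ℕ → ℕ → Expr
| contr : Expr → ℕ → ℕ → Expr

/-- A static context maps identifiers to tensor types. -/
abbrev Ctx := String → Option Ty

/-- Componentwise padding of a static context. -/
noncomputable def padCtx (M : ℕ) (Γ : Ctx) : Ctx := fun x => (Γ x).map (padT M)

/-- The typing rules of the tensor model language. -/
inductive HasTy (Γ : Ctx) : Expr → Ty → Prop
| var {x t} : Γ x = some t → HasTy Γ (.var x) t
| paren {e t} : HasTy Γ e t → HasTy Γ (.paren e) t
| prod {e₀ e₁ t₀ t₁} : HasTy Γ e₀ t₀ → HasTy Γ e₁ t₁ → HasTy Γ (.prod e₀ e₁) (t₀ ++ t₁)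
| trans {e t m n} : HasTy Γ e t → 1 ≤ m → m < n → n ≤ t.length →
    HasTy Γ (.trans e m n) (swapIdx t m n)
| contr {e t m n} : HasTy Γ e t → 1 ≤ m → m < n → n ≤ t.length →
    t.getD (m-1) 0 = t.getD (n-1) 0 → HasTy Γ (.contr e m n) (delete2 t m n)
| elem {op e₀ e₁ t} : HasTy Γ e₀ t → HasTy Γ e₁ t → HasTy Γ (.binop op e₀ e₁) t
| smul {e₀ e₁ t} : HasTy Γ e₀ [] → HasTy Γ e₁ t → HasTy Γ (.binop .mul e₀ e₁) t
| sdiv {e₀ e₁ t} : HasTy Γ e₀ t → HasTy Γ e₁ [] → HasTy Γ (.binop .div e₀ e₁) t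

/-- Syntax-directed type inference. -/
def inferTy (Γ : Ctx) : Expr → Option Ty
| .var x => Γ x
| .paren e => inferTy Γ e
| .prod e₀ e₁ => do pure ((← inferTy Γ e₀) ++ (← inferTy Γ e₁))
| .trans e m n => do
    let t ← inferTy Γ e
    if 1 ≤ m ∧ m < n ∧ n ≤ t.length then pure (swapIdx t m n) else none
| .contr e m n => do
    let t ← inferTy Γ e
    if 1 ≤ m ∧ m < n ∧ n ≤ t.length ∧ t.getD (m-1) 0 = t.getD (n-1) 0 then
      pure (delete2 t m n) else none
| .binop op e₀ e₁ => do
    let t₀ ← inferTy Γ e₀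
    let t₁ ← inferTy Γ e₁
    if t₀ = t₁ then pure t₀
    else if op = .mul ∧ t₀ = [] then pure t₁
    else if op = .div ∧ t₁ = [] then pure t₀
    else none

/-- The value domain `𝕍 ∪ {•}`: `none` is the undefined value `•`. -/
abbrev W (V : Type) := Option V

/-- Extended addition: `•` is absorbing. -/
def wadd {V : Type} [Add V] : W V → W V → W V
| some a, some b => some (a + b)
| _, _ => none

def wsub {V : Type} [Sub V] : W V → W V → W V
| some a, some b => some (a - b)
| _, _ => none

def wmul {V : Type} [Mul V] : W V → W V → W V
| some a, some b => some (a * b)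
| _, _ => none

/-- Controlled division on `𝕍 ∪ {•}`: `0/0 = 0`, `0/• = 0`, otherwise `•` absorbs
    and division by zero is undefined. -/
def wdiv {V : Type} [Field V] [DecidableEq V] : W V → W V → W V
| some a, some b => if b = 0 then (if a = 0 then some 0 else none) else some (a / b)
| some a, none => if a = 0 then some 0 else none
| none, _ => none

def applyOp {V : Type} [Field V] [DecidableEq V] : Op → W V → W V → W V
| .add => wadd
| .sub => wsub
| .mul => wmul
| .div => wdiv

/-- A dynamic store: a partial map from subscripted identifiers to `𝕍 ∪ {•}`. -/
abbrev Store (V : Type) := String × Index → Option (W V)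

/-- Denotational semantics of expression evaluation; `none` means evaluation is stuck
    (not well-defined), `some w` means the result is the value `w ∈ 𝕍 ∪ {•}`. -/
def eval {V : Type} [Field V] [DecidableEq V] (Γ : Ctx) (μ : Store V) :
    Expr → Index → Option (W V)
| .var x, i => μ (x, i)
| .paren e, i => eval Γ μ e i
| .prod e₀ e₁, i => do
    let t₀ ← inferTy Γ e₀
    let v₀ ← eval Γ μ e₀ (i.take t₀.length)
    let v₁ ← eval Γ μ e₁ (i.drop t₀.length)
    pure (wmul v₀ v₁)
| .trans e m n, i => eval Γ μ e (swapIdx i m n)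
| .contr e m n, i => do
    let t ← inferTy Γ e
    let vs ← (List.range (t.getD (m-1) 0)).mapM (fun l => eval Γ μ e (insert2 i m n (l+1)))
    pure (vs.foldl wadd (some 0))
| .binop op e₀ e₁, i => do
    let t₀ ← inferTy Γ e₀
    let t₁ ← inferTy Γ e₁
    if op = .mul ∧ t₀ = [] then
      let v₀ ← eval Γ μ e₀ []
      let v₁ ← eval Γ μ e₁ i
      pure (wmul v₀ v₁)
    else if op = .div ∧ t₁ = [] then
      let v₀ ← eval Γ μ e₀ i
      let v₁ ← eval Γ μ e₁ []
      pure (wdiv v₀ v₁)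
    else
      let v₀ ← eval Γ μ e₀ i
      let v₁ ← eval Γ μ e₁ i
      pure (applyOp op v₀ v₁)

open Classical

/-- The unique initial store determined by `Γ` and the ambient values `v`. -/
noncomputable def initStore {V : Type} (Γ : Ctx) (v : String → Index → W V) : Store V :=
  fun p => match Γ p.1 with
  | some t => if IdxLe p.2 t then some (v p.1 p.2) else none
  | none => none

/-- The unique padded initial store: values on the original domain, zero on padding. -/
noncomputable def initStoreP {V : Type} [Zero V] (M : ℕ) (Γ : Ctx)
    (v : String → Index → W V) : Store V :=
  fun p => match Γ p.1 with
  | some t =>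
      if IdxLe p.2 t then some (v p.1 p.2)
      else if IdxLe p.2 (padT M t) then some (some 0)
      else none
  | none => none

/-- A statement `x = e`. -/
abbrev Stmt := String × Expr

/-- Well-formedness of a statement list in context `Γ`. -/
def Ok (Γ : Ctx) (ss : List Stmt) : Prop :=
  ∀ s ∈ ss, ∃ t, Γ s.1 = some t ∧ HasTy Γ s.2 t

/-- Evaluation of a single assignment statement (rule ev-stmt). -/
inductive StepStmt {V : Type} [Field V] [DecidableEq V] (Γ : Ctx) :
    Store V → Stmt → Store V → Prop
| mk {μ : Store V} {x e t} :
    Γ x = some t →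
    (∀ i, IdxLe i t → μ (x, i) ≠ none) →
    (∀ i, IdxLe i t → (eval Γ μ e i).isSome) →
    StepStmt Γ μ (x, e)
      (fun p => if p.1 = x ∧ IdxLe p.2 t then eval Γ μ e p.2 else μ p)

/-- Evaluation of a statement sequence. -/
inductive StepStmts {V : Type} [Field V] [DecidableEq V] (Γ : Ctx) :
    Store V → List Stmt → Store V → Prop
| nil {μ} : StepStmts Γ μ [] μ
| cons {μ μ' μ'' s ss} : StepStmt Γ μ s μ' → StepStmts Γ μ' ss μ'' →
    StepStmts Γ μ (s :: ss) μ''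

/-- Evaluation of a single assignment statement with a padded store (rule ev-pad-stmt). -/
inductive StepStmtP {V : Type} [Field V] [DecidableEq V] (M : ℕ) (Γ : Ctx) :
    Store V → Stmt → Store V → Prop
| mk {μ : Store V} {x e t} :
    Γ x = some t →
    (∀ i, IdxLe i (padT M t) → μ (x, i) ≠ none) →
    (∀ i, IdxLe i (padT M t) → (eval (padCtx M Γ) μ e i).isSome) →
    StepStmtP M Γ μ (x, e)
      (fun p => if p.1 = x ∧ IdxLe p.2 (padT M t) then eval (padCtx M Γ) μ e p.2 else μ p)

inductive StepStmtsP {V : Type} [Field V] [DecidableEq V] (M : ℕ) (Γ : Ctx) :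
    Store V → List Stmt → Store V → Prop
| nil {μ} : StepStmtsP M Γ μ [] μ
| cons {μ μ' μ'' s ss} : StepStmtP M Γ μ s μ' → StepStmtsP M Γ μ' ss μ'' →
    StepStmtsP M Γ μ (s :: ss) μ''

theorem getD_eraseIdx (l : List ℕ) (k j d : ℕ) :
    (l.eraseIdx k).getD j d = if j < k then l.getD j d else l.getD (j+1) d := by
  simp only [List.getD_eq_getElem?_getD, List.getElem?_eraseIdx]
  split <;> rfl

theorem getD_insertIdx (l : List ℕ) (a : ℕ) {k : ℕ} (hk : k ≤ l.length) (j d : ℕ) :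
    (l.insertIdx k a).getD j d =
      if j < k then l.getD j d else if j = k then a else l.getD (j-1) d := by
  induction k generalizing l j with
  | zero =>
    simp only [List.insertIdx_zero]
    rcases j with _ | j <;> simp
  | succ k ih =>
    rcases l with _ | ⟨h, t⟩
    · simp at hk
    · simp only [List.insertIdx_succ_cons]
      rcases j with _ | j
      · simp
      · simp only [List.getD_cons_succ]
        rw [ih t (by simpa using hk)]
        rcases Nat.lt_trichotomy j k with h' | h' | h'
        · rw [if_pos h', if_pos (show j + 1 < k + 1 by omega)]
        · subst h'; simp
        · rw [if_neg (by omega), if_neg (by omega), if_neg (by omega), if_neg (by omega)]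
          have h1 : j + 1 - 1 = (j - 1) + 1 := by omega
          rw [h1, List.getD_cons_succ]

theorem getD_set (l : List ℕ) (k a j d : ℕ) :
    (l.set k a).getD j d = if k = j ∧ k < l.length then a else l.getD j d := by
  simp only [List.getD_eq_getElem?_getD, List.getElem?_set]
  split <;> rename_i h
  · subst h
    split <;> rename_i h2
    · simp [h2]
    · rw [if_neg (fun hh => h2 hh.2), List.getElem?_eq_none (by omega)]
  · simp [h]
theorem getD_append (l₁ l₂ : List ℕ) (j d : ℕ) :
    (l₁ ++ l₂).getD j d = if j < l₁.length then l₁.getD j d else l₂.getD (j - l₁.length) d := by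
  simp only [List.getD_eq_getElem?_getD, List.getElem?_append]
  split <;> rfl

theorem getD_take (l : List ℕ) (n j d : ℕ) (h : j < n) :
    (l.take n).getD j d = l.getD j d := by
  simp only [List.getD_eq_getElem?_getD, List.getElem?_take, if_pos h]

theorem getD_drop (l : List ℕ) (n j d : ℕ) :
    (l.drop n).getD j d = l.getD (n + j) d := by
  simp only [List.getD_eq_getElem?_getD, List.getElem?_drop]

theorem IdxLe.append {i : Index} {t₀ t₁ : Ty} (h : IdxLe i (t₀ ++ t₁)) :
    IdxLe (i.take t₀.length) t₀ ∧ IdxLe (i.drop t₀.length) t₁ := by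
  obtain ⟨hlen, hbd⟩ := h
  rw [List.length_append] at hlen
  refine ⟨⟨by simp [hlen], fun l hl => ?_⟩, ⟨by simp [hlen], fun l hl => ?_⟩⟩
  · rw [getD_take _ _ _ _ hl]
    have := hbd l (by simp [List.length_append]; omega)
    rwa [getD_append, if_pos hl] at this
  · rw [getD_drop]
    have := hbd (t₀.length + l) (by simp [List.length_append]; omega)
    rwa [getD_append, if_neg (by omega), Nat.add_sub_cancel_left] at this

theorem getD_eq_getD (l : List ℕ) (a d d' : ℕ) (h : a < l.length) :
    l.getD a d = l.getD a d' := by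
  simp [List.getD_eq_getElem?_getD, List.getElem?_eq_getElem h]

theorem IdxLe.swap {i : Index} {t : Ty} {m n : ℕ} (hm : 1 ≤ m) (hmn : m < n)
    (hn : n ≤ t.length) (h : IdxLe i (swapIdx t m n)) : IdxLe (swapIdx i m n) t := by
  obtain ⟨hlen, hbd⟩ := h
  have hlen' : i.length = t.length := by simpa [swapIdx] using hlen
  have hL : ∀ (l : List ℕ), l.length = t.length → ∀ j d, j < t.length →
      (swapIdx l m n).getD j d =
        if j = n-1 then l.getD (m-1) d else if j = m-1 then l.getD (n-1) d else l.getD j d := by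
    intro l hl j d hj
    simp only [swapIdx, getD_set, List.length_set, hl]
    rcases eq_or_ne j (n-1) with he | he
    · rw [if_pos ⟨he.symm, by omega⟩, if_pos he]
      exact getD_eq_getD l (m-1) 0 d (by omega)
    · rcases eq_or_ne j (m-1) with he2 | he2
      · rw [if_neg (fun hc => he (hc.1.symm)), if_pos ⟨he2.symm, by omega⟩, if_neg he, if_pos he2]
        exact getD_eq_getD l (n-1) 0 d (by omega)
      · rw [if_neg (fun hc => he (hc.1.symm)), if_neg (fun hc => he2 (hc.1.symm)), if_neg he,
          if_neg he2]
  refine ⟨by simp [swapIdx, hlen'], fun j hj => ?_⟩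
  rw [hL i hlen' j 0 hj]
  split_ifs with h1 h2
  · subst h1
    have := hbd (m-1) (by simp [swapIdx]; omega)
    rwa [hL t rfl _ 0 (by omega), if_neg (by omega), if_pos rfl] at this
  · subst h2
    have := hbd (n-1) (by simp [swapIdx]; omega)
    rwa [hL t rfl _ 0 (by omega), if_pos rfl] at this
  · have := hbd j (by simp [swapIdx]; omega)
    rwa [hL t rfl _ 0 (by omega), if_neg h1, if_neg h2] at this
theorem idxLe_insert2 {i : Index} {t : Ty} {m n v : ℕ} (hm : 1 ≤ m) (hmn : m < n)
    (hn : n ≤ t.length) (heq : t.getD (m-1) 0 = t.getD (n-1) 0)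
    (h : IdxLe i (delete2 t m n)) (hv1 : 1 ≤ v) (hv2 : v ≤ t.getD (m-1) 0) :
    IdxLe (insert2 i m n v) t := by
  obtain ⟨hlen, hbd⟩ := h
  have hd1 : (t.eraseIdx (n-1)).length = t.length - 1 :=
    List.length_eraseIdx_of_lt (by omega)
  have hdlen : (delete2 t m n).length = t.length - 2 := by
    rw [delete2, List.length_eraseIdx_of_lt (by rw [hd1]; omega), hd1]; omega
  rw [hdlen] at hlen hbd
  have hi1 : (i.insertIdx (m-1) v).length = i.length + 1 :=
    List.length_insertIdx_of_le_length (by omega) _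
  have hilen : (insert2 i m n v).length = t.length := by
    rw [insert2, List.length_insertIdx_of_le_length (by rw [hi1]; omega) _, hi1]; omega
  refine ⟨hilen, fun j hj => ?_⟩
  have hgd : ∀ p dd, (delete2 t m n).getD p dd =
      if p < m-1 then t.getD p dd
      else if p + 1 < n-1 then t.getD (p+1) dd else t.getD (p+2) dd := by
    intro p dd
    rw [delete2, getD_eraseIdx]
    split_ifs with h1 h2
    · rw [getD_eraseIdx, if_pos (by omega)]
    · rw [getD_eraseIdx, if_pos h2]
    · rw [getD_eraseIdx, if_neg (by omega)]
  have hgi : (insert2 i m n v).getD j 0 =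
      if j < m-1 then i.getD j 0
      else if j = m-1 then v
      else if j < n-1 then i.getD (j-1) 0
      else if j = n-1 then v else i.getD (j-2) 0 := by
    rw [insert2, getD_insertIdx _ _ (by rw [hi1]; omega),
        getD_insertIdx _ _ (by omega), getD_insertIdx _ _ (by omega)]
    split_ifs <;> first | rfl | omega
  rw [hgi]
  split_ifs with h1 h2 h3 h4
  · have := hbd j (by omega)
    rwa [hgd, if_pos h1] at this
  · subst h2; exact ⟨hv1, hv2⟩
  · have := hbd (j-1) (by omega)
    rw [hgd, if_neg (by omega), if_pos (by omega)] at this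
    have hje : j - 1 + 1 = j := by omega
    rwa [hje] at this
  · subst h4; exact ⟨hv1, heq ▸ hv2⟩
  · have := hbd (j-2) (by omega)
    rw [hgd, if_neg (by omega), if_neg (by omega)] at this
    have hje : j - 2 + 2 = j := by omega
    rwa [hje] at this

theorem IdxLe.eq_nil {i : Index} (h : IdxLe i []) : i = [] :=
  List.eq_nil_of_length_eq_zero (by simpa using h.1)

theorem mapM_isSome {α β : Type} (f : α → Option β) (l : List α)
    (h : ∀ a ∈ l, (f a).isSome) : (l.mapM f).isSome := by
  induction l with
  | nil => rfl
  | cons a l ih =>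
    obtain ⟨b, hb⟩ := Option.isSome_iff_exists.mp (h a (by simp))
    obtain ⟨bs, hbs⟩ := Option.isSome_iff_exists.mp (ih (fun x hx => h x (by simp [hx])))
    rw [List.mapM_cons, hb, hbs]
    rfl
theorem inferTy_eq {Γ : Ctx} {e : Expr} {t : Ty} (h : HasTy Γ e t) :
    inferTy Γ e = some t := by
  induction h with
  | var hx => simpa [inferTy]
  | paren _ ih => simpa [inferTy]
  | prod _ _ ih0 ih1 => simp [inferTy, ih0, ih1]
  | trans _ hm hmn hn ih =>
    simp only [inferTy, ih, Option.bind_eq_bind, Option.bind_some]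
    rw [if_pos ⟨hm, hmn, hn⟩]; rfl
  | contr _ hm hmn hn heq ih =>
    simp only [inferTy, ih, Option.bind_eq_bind, Option.bind_some]
    rw [if_pos ⟨hm, hmn, hn, heq⟩]; rfl
  | elem _ _ ih0 ih1 =>
    simp [inferTy, ih0, ih1]
  | smul _ _ ih0 ih1 =>
    simp only [inferTy, ih0, ih1, Option.bind_eq_bind, Option.bind_some]
    split_ifs <;> simp_all
  | sdiv _ _ ih0 ih1 =>
    simp only [inferTy, ih0, ih1, Option.bind_eq_bind, Option.bind_some]
    split_ifs <;> simp_all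
theorem eval_isSome {V : Type} [Field V] [DecidableEq V] {Γ : Ctx} {μ : Store V}
    (good : ∀ x t, Γ x = some t → ∀ i, IdxLe i t → μ (x, i) ≠ none)
    {e : Expr} {t : Ty} (h : HasTy Γ e t) :
    ∀ i, IdxLe i t → (eval Γ μ e i).isSome := by
  induction h with
  | @var x tx hx =>
    intro i hi
    simpa [eval, Option.isSome_iff_ne_none] using good x tx hx i hi
  | paren _ ih => intro i hi; simpa [eval] using ih i hi
  | @prod e₀ e₁ t₀ t₁ h0 h1 ih0 ih1 =>
    intro i hi
    obtain ⟨hi0, hi1⟩ := IdxLe.append hi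
    obtain ⟨v₀, hv₀⟩ := Option.isSome_iff_exists.mp (ih0 _ hi0)
    obtain ⟨v₁, hv₁⟩ := Option.isSome_iff_exists.mp (ih1 _ hi1)
    simp [eval, inferTy_eq h0, hv₀, hv₁]
  | @trans e' t' m n h' hm hmn hn ih =>
    intro i hi
    simpa [eval] using ih _ (IdxLe.swap hm hmn hn hi)
  | @contr e' t' m n h' hm hmn hn heq ih =>
    intro i hi
    have hms : ∀ l ∈ List.range (t'.getD (m-1) 0),
        (eval Γ μ e' (insert2 i m n (l+1))).isSome := by
      intro l hl
      rw [List.mem_range] at hl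
      exact ih _ (idxLe_insert2 hm hmn hn heq hi (by omega) (by omega))
    obtain ⟨vs, hvs⟩ := Option.isSome_iff_exists.mp
      (mapM_isSome _ _ hms)
    simp only [eval, inferTy_eq h', Option.bind_eq_bind, Option.bind_some]
    rw [hvs]
    rfl
  | @elem op e₀ e₁ t' h0 h1 ih0 ih1 =>
    intro i hi
    obtain ⟨v₀, hv₀⟩ := Option.isSome_iff_exists.mp (ih0 _ hi)
    obtain ⟨v₁, hv₁⟩ := Option.isSome_iff_exists.mp (ih1 _ hi)
    by_cases hc1 : op = Op.mul ∧ t' = []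
    · have hinil : i = [] := IdxLe.eq_nil (hc1.2 ▸ hi)
      subst hinil
      simp [eval, inferTy_eq h0, inferTy_eq h1, hc1, hv₀, hv₁]
    · by_cases hc2 : op = Op.div ∧ t' = []
      · have hinil : i = [] := IdxLe.eq_nil (hc2.2 ▸ hi)
        subst hinil
        simp [eval, inferTy_eq h0, inferTy_eq h1, hc1, hc2, hv₀, hv₁]
      · simp [eval, inferTy_eq h0, inferTy_eq h1, hc1, hc2, hv₀, hv₁]
  | @smul e₀ e₁ t' h0 h1 ih0 ih1 =>
    intro i hi
    obtain ⟨v₀, hv₀⟩ := Option.isSome_iff_exists.mp (ih0 [] ⟨rfl, by simp⟩)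
    obtain ⟨v₁, hv₁⟩ := Option.isSome_iff_exists.mp (ih1 _ hi)
    simp [eval, inferTy_eq h0, inferTy_eq h1, hv₀, hv₁]
  | @sdiv e₀ e₁ t' h0 h1 ih0 ih1 =>
    intro i hi
    obtain ⟨v₀, hv₀⟩ := Option.isSome_iff_exists.mp (ih0 _ hi)
    obtain ⟨v₁, hv₁⟩ := Option.isSome_iff_exists.mp (ih1 [] ⟨rfl, by simp⟩)
    by_cases hc1 : t' = []
    · have hinil : i = [] := IdxLe.eq_nil (hc1 ▸ hi)
      subst hinil
      simp [eval, inferTy_eq h0, inferTy_eq h1, hc1, hv₀, hv₁]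
    · simp [eval, inferTy_eq h0, inferTy_eq h1, hc1, hv₀, hv₁]
def GoodStore {V : Type} (Γ : Ctx) (μ : Store V) : Prop :=
  ∀ x t, Γ x = some t → ∀ i, IdxLe i t → μ (x, i) ≠ none

theorem good_init {V : Type} (Γ : Ctx) (v : String → Index → W V) :
    GoodStore Γ (initStore Γ v) := by
  intro x t hx i hi
  simp [initStore, hx, hi]

theorem good_step {V : Type} [Field V] [DecidableEq V] {Γ : Ctx} {μ μ' : Store V} {s : Stmt}
    (h : StepStmt Γ μ s μ') (hg : GoodStore Γ μ) : GoodStore Γ μ' := by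
  cases h with
  | @mk x e t hx _ h3 =>
    intro y ty hy i hi
    dsimp only
    split_ifs with hc
    · exact Option.isSome_iff_ne_none.mp (h3 i hc.2)
    · exact hg y ty hy i hi

theorem good_steps {V : Type} [Field V] [DecidableEq V] {Γ : Ctx} {μ μ' : Store V}
    {ss : List Stmt} (h : StepStmts Γ μ ss μ') (hg : GoodStore Γ μ) : GoodStore Γ μ' := by
  induction h with
  | nil => exact hg
  | cons h1 _ ih => exact ih (good_step h1 hg)

/-- **Safety**: in a well-formed program, whenever a statement `x = e` is reached
with intermediate store `μ₁`, every write target `x_i` (`i ≤ Γ(x)`) is in the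
domain of the store, and evaluation of `e` at every `i ≤ Γ(x)` is well-defined,
i.e. every read access during expression evaluation hits the store's domain:
there are no out-of-bounds store accesses. -/
theorem safety (V : Type) [Field V] [DecidableEq V] (Γ : Ctx)
    (v : String → Index → W V) (ss : List Stmt) (hok : Ok Γ ss) :
    ∀ ss₁ x e ss₂, ss = ss₁ ++ (x, e) :: ss₂ →
    ∀ μ₁ : Store V, StepStmts Γ (initStore Γ v) ss₁ μ₁ →
    ∀ t, Γ x = some t →
      (∀ i, IdxLe i t → μ₁ (x, i) ≠ none) ∧
      (∀ i, IdxLe i t → (eval Γ μ₁ e i).isSome) := by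
  intro ss₁ x e ss₂ hss μ₁ hsteps t ht
  have good₁ : GoodStore Γ μ₁ := good_steps hsteps (good_init Γ v)
  obtain ⟨t', ht', hty⟩ := hok (x, e) (by rw [hss]; simp)
  rw [ht] at ht'
  obtain rfl : t = t' := by injection ht'
  exact ⟨fun i hi => good₁ x t ht i hi, fun i hi => eval_isSome good₁ hty i hi⟩
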